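/- Let l ≥ 2 be an integer, μ² = (l-1)(l+2), σ₀ = l(l-1)(l+1)(l+2)/12 (assumed so that 4σ₀ is a positive integer), and define Pₙ for 0 ≤ n ≤ 4σ₀-1 by Pₙ = 3(-2σ₀)^{n-4σ₀-1}(4σ₀)!(μ²-6σ₀)[(n-4σ₀)μ² - 12σ₀] / (n!(μ²+12σ₀)σ₀μ⁶), together with P_{4σ₀} = (μ²-3)/(σ₀μ⁴) and P_{4σ₀+1} = 1/(2σ₀μ²), and set P₋₁ = P_{4σ₀+2} = 0. Then these coefficients satisfy the recurrence 2σ₀μ²P_{n-1} + [μ²n + 2σ₀(6+2μ²) - μ²]Pₙ + (6+2μ²)(n+1)P_{n+1} = cₙ for all 0 ≤ n ≤ 4σ₀+2, where cₙ = 8 if n = 4σ₀-1, cₙ = 12 if n = 4σ₀, cₙ = 6 if n = 4σ₀+1, cₙ = 1 if n = 4σ₀+2, and cₙ = 0 otherwise. -/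

import Mathlib

set_option maxHeartbeats 2000000 in
/-- The explicit coefficients of the degree-(4σ₀+1) polynomial in Chandrasekhar's second
Liouvillian solution of the Regge–Wheeler equation satisfy the inhomogeneous three-term
recurrence coming from `(P'(w)+2σ₀P(w))(μ²w+2μ²+6) - μ²P(w) = w^{4σ₀-1}(w+2)³`. -/
theorem stmt_3 (l : ℤ) (hl : 2 ≤ l) (σ₀ μ2 : ℝ)
    (hσ : σ₀ = (l : ℝ) * ((l : ℝ) - 1) * ((l : ℝ) + 1) * ((l : ℝ) + 2) / 12)
    (hμ : μ2 = ((l : ℝ) - 1) * ((l : ℝ) + 2))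
    (M : ℕ) (hMpos : 0 < M) (hM : (M : ℝ) = 4 * σ₀)
    (P : ℤ → ℝ)
    (hzero : ∀ n : ℤ, n < 0 ∨ (M : ℤ) + 2 ≤ n → P n = 0)
    (hPn : ∀ n : ℤ, 0 ≤ n → n ≤ (M : ℤ) - 1 →
      P n = 3 * (-2 * σ₀) ^ (n - (M : ℤ) - 1) * (Nat.factorial M : ℝ) * (μ2 - 6 * σ₀) *
          (((n : ℝ) - (M : ℝ)) * μ2 - 12 * σ₀) /
        ((Nat.factorial n.toNat : ℝ) * (μ2 + 12 * σ₀) * σ₀ * μ2 ^ 3))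
    (hPM : P (M : ℤ) = (μ2 - 3) / (σ₀ * μ2 ^ 2))
    (hPM1 : P ((M : ℤ) + 1) = 1 / (2 * σ₀ * μ2)) :
    ∀ n : ℤ, 0 ≤ n → n ≤ (M : ℤ) + 2 →
      2 * σ₀ * μ2 * P (n - 1) + (μ2 * (n : ℝ) + 2 * σ₀ * (6 + 2 * μ2) - μ2) * P n +
          (6 + 2 * μ2) * ((n : ℝ) + 1) * P (n + 1) =
        (if n = (M : ℤ) - 1 then 8
          else if n = (M : ℤ) then 12
          else if n = (M : ℤ) + 1 then 6
          else if n = (M : ℤ) + 2 then 1 else 0) := by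
  have hl' : (2:ℝ) ≤ (l:ℝ) := by exact_mod_cast hl
  have hμ4 : (4:ℝ) ≤ μ2 := by rw [hμ]; nlinarith
  have hμne : μ2 ≠ 0 := by intro h; linarith
  have hσ2 : (2:ℝ) ≤ σ₀ := by rw [hσ]; nlinarith
  have hσne : σ₀ ≠ 0 := by intro h; linarith
  have h12 : 12 * σ₀ = μ2 * (μ2 + 2) := by rw [hσ, hμ]; ring
  have hDne : μ2 + 12*σ₀ ≠ 0 := by intro h; nlinarith
  have hbne : (-2*σ₀ : ℝ) ≠ 0 := by intro h; apply hσne; linarith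
  have hM8 : (8:ℤ) ≤ (M:ℤ) := by
    have h8 : (8:ℝ) ≤ (M:ℝ) := by rw [hM]; linarith
    exact_mod_cast h8
  obtain ⟨j, rfl⟩ : ∃ j:ℕ, M = j+2 := ⟨M-2, by omega⟩
  push_cast at hM
  have hfj : (Nat.factorial j : ℝ) ≠ 0 := Nat.cast_ne_zero.mpr (Nat.factorial_ne_zero j)
  have hfact2 : (Nat.factorial (j+2) : ℝ) = ((j:ℝ)+2)*((j:ℝ)+1)*(Nat.factorial j : ℝ) := by
    rw [show j+2 = (j+1)+1 from rfl, Nat.factorial_succ, Nat.factorial_succ]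
    push_cast; ring
  have hfact1 : (Nat.factorial (j+1) : ℝ) = ((j:ℝ)+1)*(Nat.factorial j : ℝ) := by
    rw [Nat.factorial_succ]; push_cast; ring

  have hσfix : σ₀ = μ2*(μ2+2)/12 := by linarith
  have hjfix : (j:ℝ) = μ2*(μ2+2)/3 - 2 := by linarith
  have hzm2 : (-2*σ₀:ℝ)^(-2:ℤ) = 1/(4*σ₀^2) := by
    rw [show (-2:ℤ) = -(2:ℕ) by rfl, zpow_neg, zpow_natCast]; field_simp; ring
  have hzm3 : (-2*σ₀:ℝ)^(-3:ℤ) = -1/(8*σ₀^3) := by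
    rw [show (-3:ℤ) = -(3:ℕ) by rfl, zpow_neg, zpow_natCast]; field_simp; ring
  intro n hn0 hn2
  have hcase : (n = 0 ∨ (1 ≤ n ∧ n ≤ ((j+2:ℕ):ℤ) - 2)) ∨ n = ((j+2:ℕ):ℤ)-1 ∨ n = ((j+2:ℕ):ℤ)
      ∨ n = ((j+2:ℕ):ℤ)+1 ∨ n = ((j+2:ℕ):ℤ)+2 := by omega
  rcases hcase with (rfl | ⟨h1, h2⟩) | rfl | rfl | rfl | rfl

  · -- n = 0
    rw [show (0:ℤ)-1 = -1 by ring, show (0:ℤ)+1 = 1 by ring, hzero (-1) (by omega),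
        hPn 0 (by omega) (by omega), hPn 1 (by omega) (by omega),
        if_neg (by omega), if_neg (by omega), if_neg (by omega), if_neg (by omega)]
    rw [show ((1:ℤ)) - ((j+2:ℕ):ℤ) - 1 = ((0:ℤ) - ((j+2:ℕ):ℤ) - 1) + 1 by ring,
        zpow_add_one₀ hbne]
    push_cast
    field_simp [hσne, hμne, hDne]
    rw [hσfix, hjfix]
    ring
  · -- 1 ≤ n ≤ M-2
    obtain ⟨k, rfl⟩ : ∃ k:ℕ, n = (k:ℤ)+1 := ⟨(n-1).toNat, by omega⟩
    have hfk : (Nat.factorial k : ℝ) ≠ 0 := Nat.cast_ne_zero.mpr (Nat.factorial_ne_zero k)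
    have hfk1 : (Nat.factorial (k+1) : ℝ) = ((k:ℝ)+1)*(Nat.factorial k : ℝ) := by
      rw [Nat.factorial_succ]; push_cast; ring
    have hfk2 : (Nat.factorial (k+2) : ℝ) = ((k:ℝ)+2)*((k:ℝ)+1)*(Nat.factorial k : ℝ) := by
      rw [show k+2 = (k+1)+1 from rfl, Nat.factorial_succ, Nat.factorial_succ]; push_cast; ring
    rw [show (k:ℤ)+1-1 = (k:ℤ) by ring, show (k:ℤ)+1+1 = (k:ℤ)+2 by ring,
        hPn (k:ℤ) (by omega) (by omega), hPn ((k:ℤ)+1) (by omega) (by omega),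
        hPn ((k:ℤ)+2) (by omega) (by omega),
        if_neg (by omega), if_neg (by omega), if_neg (by omega), if_neg (by omega),
        show ((k:ℤ)).toNat = k by omega, show ((k:ℤ)+1).toNat = k+1 by omega,
        show ((k:ℤ)+2).toNat = k+2 by omega,
        show ((k:ℤ)+1) - ((j+2:ℕ):ℤ) - 1 = ((k:ℤ) - ((j+2:ℕ):ℤ) - 1) + 1 by ring,
        show ((k:ℤ)+2) - ((j+2:ℕ):ℤ) - 1 = (((k:ℤ) - ((j+2:ℕ):ℤ) - 1) + 1) + 1 by ring,
        hfk1, hfk2]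
    simp only [zpow_add_one₀ hbne]
    generalize (-2*σ₀:ℝ)^((k:ℤ) - ((j+2:ℕ):ℤ) - 1) = z
    push_cast
    field_simp [hσne, hμne, hDne]
    rw [hσfix, hjfix]
    ring
  · -- n = M-1
    rw [show ((j+2:ℕ):ℤ)-1-1 = ((j+2:ℕ):ℤ)-2 by ring,
        show ((j+2:ℕ):ℤ)-1+1 = ((j+2:ℕ):ℤ) by ring,
        hPn (((j+2:ℕ):ℤ)-2) (by omega) (by omega),
        hPn (((j+2:ℕ):ℤ)-1) (by omega) (by omega), hPM,
        if_pos rfl,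
        show (((j+2:ℕ):ℤ)-2).toNat = j by omega,
        show (((j+2:ℕ):ℤ)-1).toNat = j+1 by omega,
        show (((j+2:ℕ):ℤ)-2) - ((j+2:ℕ):ℤ) - 1 = (-3:ℤ) by ring,
        show (((j+2:ℕ):ℤ)-1) - ((j+2:ℕ):ℤ) - 1 = (-2:ℤ) by ring,
        hzm3, hzm2, hfact1, hfact2]
    push_cast
    field_simp [hσne, hμne, hDne]
    rw [hσfix, hjfix]
    ring
  · -- n = M
    rw [hPn (((j+2:ℕ):ℤ)-1) (by omega) (by omega), hPM, hPM1,
        if_neg (by omega), if_pos rfl,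
        show (((j+2:ℕ):ℤ)-1).toNat = j+1 by omega,
        show (((j+2:ℕ):ℤ)-1) - ((j+2:ℕ):ℤ) - 1 = (-2:ℤ) by ring,
        hzm2, hfact1, hfact2]
    push_cast
    field_simp [hσne, hμne, hDne]
    rw [hσfix, hjfix]
    ring
  · -- n = M+1
    rw [show ((j+2:ℕ):ℤ)+1-1 = ((j+2:ℕ):ℤ) by ring, hPM, hPM1,
        hzero (((j+2:ℕ):ℤ)+1+1) (by omega),
        if_neg (by omega), if_neg (by omega), if_pos rfl]
    push_cast
    field_simp [hσne, hμne, hDne]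
    rw [hσfix, hjfix]
    ring
  · -- n = M+2
    rw [show ((j+2:ℕ):ℤ)+2-1 = ((j+2:ℕ):ℤ)+1 by ring, hPM1,
        hzero (((j+2:ℕ):ℤ)+2) (by omega), hzero (((j+2:ℕ):ℤ)+2+1) (by omega),
        if_neg (by omega), if_neg (by omega), if_neg (by omega), if_pos rfl]
    field_simp
    ring
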